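/- Let μ, G > 0, let n ≥ 2 be an integer and K ≥ 1 an integer. Suppose x_n^K = (1 − ημK)^{nK} x₀ + (G/(μK)) · [(1 − (1−ημK)^{nK})/(1 − (1−ημK)^n)] · (1 − (1 − ημK)^{(n−1)/2})² with x₀ = 0 and 1/n ≤ ημK ≤ 1. Then x_n^K ≥ (G/(μK)) (1 − e^{−1})(1 − e^{−1/4})². -/
import Mathlib


theorem igd_odd_closed_form_lb (μ G η : ℝ) (n K : ℕ) (hμ : 0 < μ) (hG : 0 < G)
    (hn : 2 ≤ n) (hK : 1 ≤ K)
    (h₁ : 1 / (n : ℝ) ≤ η * μ * K) (h₂ : η * μ * K ≤ 1)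
    (x : ℝ)
    (hx : x = (1 - η * μ * K) ^ (n * K) * (0 : ℝ) +
      (G / (μ * K)) * ((1 - (1 - η * μ * K) ^ (n * K)) / (1 - (1 - η * μ * K) ^ n)) *
        (1 - (1 - η * μ * K) ^ (((n : ℝ) - 1) / 2)) ^ 2) :
    x ≥ (G / (μ * K)) * (1 - Real.exp (-1)) * (1 - Real.exp (-(1 / 4))) ^ 2 := by
  have hn' : (2:ℝ) ≤ (n:ℝ) := by exact_mod_cast hn
  have hnpos : (0:ℝ) < (n:ℝ) := by linarith
  have hKpos : (0:ℝ) < (K:ℝ) := by exact_mod_cast hK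
  set r : ℝ := 1 - η * μ * K with hrdef
  have hr0 : 0 ≤ r := by simp only [hrdef]; linarith
  have hr1 : r ≤ 1 - 1/(n:ℝ) := by simp only [hrdef]; linarith
  have hrlt1 : r < 1 := by
    have : 0 < 1/(n:ℝ) := by positivity
    linarith
  have hkey : 1 - 1/(n:ℝ) ≤ Real.exp (-(1/(n:ℝ))) := by
    have := Real.add_one_le_exp (-(1/(n:ℝ)))
    linarith
  have hr_exp : r ≤ Real.exp (-(1/(n:ℝ))) := le_trans hr1 hkey
  have hpow_n : r ^ n ≤ Real.exp (-1) := by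
    calc r ^ n ≤ (Real.exp (-(1/(n:ℝ)))) ^ n := pow_le_pow_left₀ hr0 hr_exp n
    _ = Real.exp ((n:ℝ) * (-(1/(n:ℝ)))) := by rw [← Real.exp_nat_mul]
    _ = Real.exp (-1) := by
        congr 1
        field_simp
  have hpow_nK : r ^ (n*K) ≤ Real.exp (-1) := by
    calc r ^ (n*K) ≤ r ^ n :=
          pow_le_pow_of_le_one hr0 hrlt1.le (Nat.le_mul_of_pos_right n (by omega))
    _ ≤ _ := hpow_n
  have hc0 : (0:ℝ) ≤ ((n:ℝ)-1)/2 := by linarith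
  have hrpow : r ^ (((n:ℝ)-1)/2) ≤ Real.exp (-(1/4)) := by
    calc r ^ (((n:ℝ)-1)/2) ≤ (Real.exp (-(1/(n:ℝ)))) ^ (((n:ℝ)-1)/2) :=
          Real.rpow_le_rpow hr0 hr_exp hc0
    _ = Real.exp ((-(1/(n:ℝ))) * (((n:ℝ)-1)/2)) := by rw [← Real.exp_mul]
    _ ≤ Real.exp (-(1/4)) := by
        apply Real.exp_le_exp.mpr
        have hinv : (1/(n:ℝ)) * (n:ℝ) = 1 := by field_simp
        have hu : 0 < 1/(n:ℝ) := by positivity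
        nlinarith [hinv, hu, hn']
  have he1 : Real.exp (-1) < 1 := by
    calc Real.exp (-1) < Real.exp 0 := Real.exp_lt_exp.mpr (by norm_num)
    _ = 1 := Real.exp_zero
  have he2 : Real.exp (-(1/4)) < 1 := by
    calc Real.exp (-(1/4)) < Real.exp 0 := Real.exp_lt_exp.mpr (by norm_num)
    _ = 1 := Real.exp_zero
  have hrn0 : 0 ≤ r ^ n := pow_nonneg hr0 n
  have hD : 0 < 1 - r ^ n := by
    have : r ^ n < 1 := pow_lt_one₀ hr0 hrlt1 (by omega)
    linarith
  have hD1 : 1 - r ^ n ≤ 1 := by linarith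
  have hA : 1 - Real.exp (-1) ≤ (1 - r ^ (n*K)) / (1 - r ^ n) := by
    rw [le_div_iff₀ hD]
    nlinarith [Real.exp_pos (-1)]
  have hA0 : (0:ℝ) ≤ (1 - r ^ (n*K)) / (1 - r ^ n) :=
    le_trans (by linarith) hA
  have hB : (1 - Real.exp (-(1/4))) ^ 2 ≤ (1 - r ^ (((n:ℝ)-1)/2)) ^ 2 :=
    pow_le_pow_left₀ (by linarith) (by linarith) 2
  have hB0 : (0:ℝ) ≤ (1 - Real.exp (-(1/4))) ^ 2 := by positivity
  have hC0 : (0:ℝ) ≤ G / (μ * K) := by positivity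
  have hAB : (1 - Real.exp (-1)) * (1 - Real.exp (-(1/4))) ^ 2 ≤
      ((1 - r ^ (n*K)) / (1 - r ^ n)) * (1 - r ^ (((n:ℝ)-1)/2)) ^ 2 :=
    mul_le_mul hA hB hB0 hA0
  rw [hx, ge_iff_le]
  calc G / (μ * ↑K) * (1 - Real.exp (-1)) * (1 - Real.exp (-(1/4))) ^ 2
      = G / (μ * ↑K) * ((1 - Real.exp (-1)) * (1 - Real.exp (-(1/4))) ^ 2) := by ring
    _ ≤ G / (μ * ↑K) * (((1 - r ^ (n*K)) / (1 - r ^ n)) * (1 - r ^ (((n:ℝ)-1)/2)) ^ 2) :=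
        mul_le_mul_of_nonneg_left hAB hC0
    _ = r ^ (n * K) * 0 + G / (μ * ↑K) * ((1 - r ^ (n*K)) / (1 - r ^ n)) * (1 - r ^ (((n:ℝ)-1)/2)) ^ 2 := by ring
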